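/- arXiv:1911.01827 — 3 statements merged into one kernel-verified Lean document; each statement's English description precedes it below -/
import Mathlib

section
/- If t_1, ..., t_J are independent with t_j ~ Weibull(a, λ_j), then for each index h, P(t_h = min_j t_j) = λ_h / (λ_1 + ... + λ_J). -/
open MeasureTheory ProbabilityTheory Real

/-- The Weibull distribution with shape `a > 0` and rate `l > 0`, defined by its density
`a * l * t^(a-1) * exp (-l * t^a)` on `(0, ∞)` with respect to Lebesgue measure. -/
noncomputable def weibullMeasure (a l : ℝ) : Measure ℝ :=
  volume.withDensity fun t =>
    ENNReal.ofReal (if 0 < t then a * l * t ^ (a - 1) * Real.exp (-l * t ^ a) else 0)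

open Set Filter Topology ENNReal

lemma weibull_hasDerivAt (a L : ℝ) (ha : 0 < a) (t : ℝ) (ht : 0 < t) :
    HasDerivAt (fun s : ℝ => -Real.exp (-L * s ^ a))
      (a * L * t ^ (a - 1) * Real.exp (-L * t ^ a)) t := by
  have h1 : HasDerivAt (fun s : ℝ => s ^ a) (a * t ^ (a - 1)) t :=
    Real.hasDerivAt_rpow_const (Or.inl ht.ne')
  have h2 : HasDerivAt (fun s : ℝ => -L * s ^ a) (-L * (a * t ^ (a - 1))) t := h1.const_mul _
  have h3 := (Real.hasDerivAt_exp (-L * t ^ a)).comp t h2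
  have h4 : HasDerivAt (fun s : ℝ => -Real.exp (-L * s ^ a))
      (-(Real.exp (-L * t ^ a) * (-L * (a * t ^ (a - 1))))) t := h3.neg
  convert h4 using 1
  ring

lemma weibull_lintegral (a L : ℝ) (ha : 0 < a) (hL : 0 < L) (y : ℝ) (hy : 0 ≤ y) :
    ∫⁻ t in Set.Ioi y, ENNReal.ofReal (a * L * t ^ (a - 1) * Real.exp (-L * t ^ a))
      = ENNReal.ofReal (Real.exp (-L * y ^ a)) := by
  have hcont : ContinuousWithinAt (fun s : ℝ => -Real.exp (-L * s ^ a)) (Set.Ici y) y := by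
    have c1 : ContinuousAt (fun s : ℝ => s ^ a) y :=
      Real.continuousAt_rpow_const y a (Or.inr ha.le)
    exact (((Real.continuous_exp.continuousAt.comp
      ((continuousAt_const.mul c1) : ContinuousAt (fun s : ℝ => -L * s ^ a) y))).neg).continuousWithinAt
  have hderiv : ∀ x ∈ Set.Ioi y, HasDerivAt (fun s : ℝ => -Real.exp (-L * s ^ a))
      (a * L * x ^ (a - 1) * Real.exp (-L * x ^ a)) x :=
    fun x hx => weibull_hasDerivAt a L ha x (lt_of_le_of_lt hy hx)
  have hpos : ∀ x ∈ Set.Ioi y, 0 ≤ a * L * x ^ (a - 1) * Real.exp (-L * x ^ a) := by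
    intro x hx
    have hx0 : (0:ℝ) ≤ x := hy.trans (le_of_lt hx)
    positivity
  have htop : Tendsto (fun s : ℝ => -Real.exp (-L * s ^ a)) atTop (𝓝 0) := by
    have t1 : Tendsto (fun s : ℝ => s ^ a) atTop atTop := tendsto_rpow_atTop ha
    have t2 : Tendsto (fun s : ℝ => L * s ^ a) atTop atTop := t1.const_mul_atTop hL
    have t3 : Tendsto (fun s : ℝ => -L * s ^ a) atTop atBot := by
      simpa [Function.comp_def, neg_mul] using tendsto_neg_atTop_atBot.comp t2
    have t4 : Tendsto (fun s : ℝ => Real.exp (-L * s ^ a)) atTop (𝓝 0) :=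
      Real.tendsto_exp_atBot.comp t3
    simpa using t4.neg
  have hint := integral_Ioi_of_hasDerivAt_of_nonneg hcont hderiv hpos htop
  have hInt : IntegrableOn (fun x => a * L * x ^ (a - 1) * Real.exp (-L * x ^ a)) (Set.Ioi y) :=
    integrableOn_Ioi_deriv_of_nonneg hcont hderiv hpos htop
  rw [← ofReal_integral_eq_lintegral_ofReal hInt
      ((ae_restrict_iff' measurableSet_Ioi).2 (Filter.Eventually.of_forall hpos))]
  rw [hint]
  norm_num

lemma weibull_Ici (a L : ℝ) (ha : 0 < a) (hL : 0 < L) (y : ℝ) (hy : 0 < y) :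
    weibullMeasure a L (Set.Ici y) = ENNReal.ofReal (Real.exp (-L * y ^ a)) := by
  rw [weibullMeasure, withDensity_apply _ measurableSet_Ici,
    ← MeasureTheory.restrict_Ioi_eq_restrict_Ici,
    setLIntegral_congr_fun measurableSet_Ioi
      (fun t (ht : y < t) => by rw [if_pos (hy.trans ht)])]
  exact weibull_lintegral a L ha hL y hy.le

lemma weibull_density_measurable (a L : ℝ) :
    Measurable fun t : ℝ =>
      ENNReal.ofReal (if 0 < t then a * L * t ^ (a - 1) * Real.exp (-L * t ^ a) else 0) := by
  apply ENNReal.measurable_ofReal.comp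
  apply Measurable.ite measurableSet_Ioi _ measurable_const
  fun_prop


/-- If `t_1, ..., t_J` are independent with `t_j ~ Weibull(a, λ_j)`, then for each `h`,
`P(t_h = min_j t_j) = λ_h / (λ_1 + ⋯ + λ_J)`. -/
theorem weibull_racing_argmin_prob {Ω : Type*} [MeasurableSpace Ω] (P : Measure Ω)
    [IsProbabilityMeasure P] (J : ℕ) (hJ : 0 < J) (a : ℝ) (ha : 0 < a)
    (l : Fin J → ℝ) (hl : ∀ j, 0 < l j) (t : Fin J → Ω → ℝ)
    (hmeas : ∀ j, Measurable (t j))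
    (hindep : iIndepFun t P)
    (hlaw : ∀ j, Measure.map (t j) P = weibullMeasure a (l j)) (h : Fin J) :
    P {ω | t h ω = ⨅ j, t j ω} = ENNReal.ofReal (l h / ∑ j, l j) := by
  haveI : Nonempty (Fin J) := ⟨⟨0, hJ⟩⟩
  have hprob : ∀ j, IsProbabilityMeasure (weibullMeasure a (l j)) := fun j => by
    rw [← hlaw j]; exact Measure.isProbabilityMeasure_map (hmeas j).aemeasurable
  set μ' : Fin J → Measure ℝ := fun j => weibullMeasure a (l j) with hμ'
  haveI : ∀ j, IsProbabilityMeasure (μ' j) := hprob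
  haveI : ∀ j, SigmaFinite (μ' j) := fun j => inferInstance
  -- Step 1 : the event is an intersection of pairwise comparisons
  have hset : {ω | t h ω = ⨅ j, t j ω} = ⋂ j, {ω | t h ω ≤ t j ω} := by
    ext ω
    simp only [Set.mem_setOf_eq, Set.mem_iInter]
    constructor
    · intro he j
      rw [he]
      exact ciInf_le (Set.Finite.bddBelow (Set.finite_range _)) j
    · intro hle
      exact le_antisymm (le_ciInf hle) (ciInf_le (Set.Finite.bddBelow (Set.finite_range _)) h)
  -- Step 2 : the joint law is the product measure
  have hTmeas : Measurable (fun ω j => t j ω) := measurable_pi_lambda _ hmeas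
  have hmap : Measure.map (fun ω j => t j ω) P = Measure.pi μ' := by
    refine (Measure.pi_eq fun s hs => ?_).symm
    rw [Measure.map_apply hTmeas (MeasurableSet.univ_pi hs)]
    have hpre : (fun ω j => t j ω) ⁻¹' Set.pi Set.univ s = ⋂ j, t j ⁻¹' s j := by
      ext ω; simp [Set.mem_pi]
    rw [hpre, hindep.meas_iInter (fun j => ⟨s j, hs j, rfl⟩)]
    exact Finset.prod_congr rfl fun j _ => by
      show P (t j ⁻¹' s j) = weibullMeasure a (l j) (s j)
      rw [← hlaw j, Measure.map_apply (hmeas j) (hs j)]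
  have hSmeas : MeasurableSet {x : Fin J → ℝ | ∀ j, x h ≤ x j} := by
    rw [show {x : Fin J → ℝ | ∀ j, x h ≤ x j} = ⋂ j, {x | x h ≤ x j} from by ext; simp]
    exact MeasurableSet.iInter fun j =>
      measurableSet_le (measurable_pi_apply h) (measurable_pi_apply j)
  have h1 : (⋂ j, {ω | t h ω ≤ t j ω})
      = (fun ω j => t j ω) ⁻¹' {x : Fin J → ℝ | ∀ j, x h ≤ x j} := by
    ext ω; simp
  rw [hset, h1, ← Measure.map_apply hTmeas hSmeas, hmap]
  -- Step 3 : compute the product measure of the set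
  obtain ⟨n, rfl⟩ := Nat.exists_eq_succ_of_ne_zero hJ.ne'
  set L : ℝ := ∑ j, l j with hLdef
  have hL : 0 < L := Finset.sum_pos (fun j _ => hl j) ⟨h, Finset.mem_univ h⟩
  set ν : Measure (Fin n → ℝ) := Measure.pi fun j : Fin n => μ' (h.succAbove j) with hν
  set T : Set (ℝ × (Fin n → ℝ)) := {p | ∀ j, p.1 ≤ p.2 j} with hT
  have hTm : MeasurableSet T := by
    rw [show T = ⋂ j, {p : ℝ × (Fin n → ℝ) | p.1 ≤ p.2 j} from by ext; simp [hT]]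
    exact MeasurableSet.iInter fun j =>
      measurableSet_le measurable_fst ((measurable_pi_apply j).comp measurable_snd)
  have hmp := measurePreserving_piFinSuccAbove μ' h
  have hpre2 : (MeasurableEquiv.piFinSuccAbove (fun _ : Fin (n+1) => ℝ) h) ⁻¹' T
      = {x : Fin (n+1) → ℝ | ∀ j, x h ≤ x j} := by
    ext x
    simp only [hT, Set.mem_preimage, Set.mem_setOf_eq]
    constructor
    · intro hx
      exact (Fin.forall_iff_succAbove (P := fun j => x h ≤ x j) h).2 ⟨le_refl _, hx⟩
    · intro hx j
      exact hx _
  rw [← hpre2, hmp.measure_preimage hTm.nullMeasurableSet, Measure.prod_apply hTm]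
  have hfiber : ∀ y : ℝ, ν (Prod.mk y ⁻¹' T)
      = ∏ j : Fin n, (μ' (h.succAbove j)) (Set.Ici y) := by
    intro y
    have : Prod.mk y ⁻¹' T = Set.pi Set.univ fun _ : Fin n => Set.Ici y := by
      ext z; simp [hT, Set.mem_pi, Pi.le_def]
    rw [this, Measure.pi_pi]
  simp_rw [← hν, hfiber]
  -- Step 4 : compute the lintegral
  set F : ℝ → ℝ≥0∞ := fun y => ∏ j : Fin n, (μ' (h.succAbove j)) (Set.Ici y) with hF
  have hF_anti : Antitone F := fun y₁ y₂ hle =>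
    Finset.prod_le_prod' fun j _ => measure_mono (Set.Ici_subset_Ici.2 hle)
  have hF_meas : Measurable F := hF_anti.measurable
  have hd_meas := weibull_density_measurable a (l h)
  show ∫⁻ y, F y ∂(weibullMeasure a (l h)) = _
  rw [weibullMeasure, lintegral_withDensity_eq_lintegral_mul _ hd_meas hF_meas]
  rw [← lintegral_add_compl _ (measurableSet_Ioi (a := (0:ℝ)))]
  have hzero : ∫⁻ y in (Set.Ioi (0:ℝ))ᶜ, ((fun t : ℝ =>
      ENNReal.ofReal (if 0 < t then a * (l h) * t ^ (a - 1) * Real.exp (-(l h) * t ^ a) else 0))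
        * F) y = 0 := by
    have hz : ∀ y ∈ (Set.Ioi (0:ℝ))ᶜ, ((fun t : ℝ =>
        ENNReal.ofReal (if 0 < t then a * (l h) * t ^ (a - 1) * Real.exp (-(l h) * t ^ a) else 0))
          * F) y = (fun _ : ℝ => (0:ℝ≥0∞)) y := by
      intro y hy
      have h0 : ¬ (0:ℝ) < y := by simpa using hy
      simp [Pi.mul_apply, h0]
    rw [setLIntegral_congr_fun measurableSet_Ioi.compl hz,
      lintegral_zero]
  rw [hzero, add_zero]
  have hM : L = l h + ∑ j : Fin n, l (h.succAbove j) := Fin.sum_univ_succAbove l h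
  set M : ℝ := ∑ j : Fin n, l (h.succAbove j) with hMdef
  have hM0 : 0 ≤ M := Finset.sum_nonneg fun j _ => (hl _).le
  have hmain : ∀ y ∈ Set.Ioi (0:ℝ), ((fun t : ℝ =>
      ENNReal.ofReal (if 0 < t then a * (l h) * t ^ (a - 1) * Real.exp (-(l h) * t ^ a) else 0))
        * F) y
      = ENNReal.ofReal (l h / L) * ENNReal.ofReal (a * L * y ^ (a - 1) * Real.exp (-L * y ^ a)) := by
    intro y hy
    have hy0 : (0:ℝ) < y := hy
    have hFy : F y = ENNReal.ofReal (Real.exp (-M * y ^ a)) := by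
      rw [hF]
      have : ∀ j : Fin n, (μ' (h.succAbove j)) (Set.Ici y)
          = ENNReal.ofReal (Real.exp (-(l (h.succAbove j)) * y ^ a)) := fun j =>
        weibull_Ici a (l (h.succAbove j)) ha (hl _) y hy0
      simp_rw [this]
      rw [← ENNReal.ofReal_prod_of_nonneg (fun j _ => (Real.exp_pos _).le), ← Real.exp_sum]
      congr 2
      rw [← Finset.sum_mul, Finset.sum_neg_distrib, neg_mul]
    simp only [Pi.mul_apply, if_pos hy0, hFy]
    have hy0' : (0:ℝ) ≤ y := hy0.le
    have hnn1 : 0 ≤ a * l h * y ^ (a - 1) * Real.exp (-(l h) * y ^ a) :=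
      mul_nonneg (mul_nonneg (mul_nonneg ha.le (hl h).le) (Real.rpow_nonneg hy0' _))
        (Real.exp_pos _).le
    have hnn2 : 0 ≤ l h / L := div_nonneg (hl h).le hL.le
    rw [← ENNReal.ofReal_mul hnn1, ← ENNReal.ofReal_mul hnn2]
    congr 1
    have hexp : Real.exp (-(l h) * y ^ a) * Real.exp (-M * y ^ a) = Real.exp (-L * y ^ a) := by
      rw [← Real.exp_add]
      congr 1
      rw [hM]; ring
    have hlh : l h = (l h / L) * L := by field_simp
    calc a * (l h) * y ^ (a - 1) * Real.exp (-(l h) * y ^ a) * Real.exp (-M * y ^ a)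
        = a * (l h) * y ^ (a - 1) * (Real.exp (-(l h) * y ^ a) * Real.exp (-M * y ^ a)) := by ring
      _ = a * (l h) * y ^ (a - 1) * Real.exp (-L * y ^ a) := by rw [hexp]
      _ = l h / L * (a * L * y ^ (a - 1) * Real.exp (-L * y ^ a)) := by
          rw [div_mul_eq_mul_div, eq_div_iff hL.ne']; ring
  rw [setLIntegral_congr_fun measurableSet_Ioi hmain]
  rw [lintegral_const_mul' _ _ ENNReal.ofReal_ne_top]
  rw [weibull_lintegral a L ha hL 0 le_rfl]
  rw [Real.zero_rpow ha.ne', mul_zero, Real.exp_zero, ENNReal.ofReal_one, mul_one]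
end

section
/- For independent t_j ~ Weibull(a, λ_j), j = 1, ..., J, the integral ∫_τ^∞ exp(-u^a · Σ_{j≠h} λ_j) · a·λ_h·u^(a-1)·exp(-λ_h·u^a) du equals (λ_h / Σ_j λ_j) · exp(-τ^a · Σ_j λ_j), for all τ ≥ 0, a > 0, and λ_j > 0. -/
open MeasureTheory Real

/-- The key integral identity in the proof of the Weibull racing property: for `a > 0`,
`λ_j > 0` and `τ ≥ 0`,
`∫_τ^∞ exp(-u^a Σ_{j≠h} λ_j) · a λ_h u^(a-1) exp(-λ_h u^a) du = (λ_h / Σ_j λ_j) exp(-τ^a Σ_j λ_j)`. -/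
theorem weibull_racing_integral (J : ℕ) (a : ℝ) (ha : 0 < a) (l : Fin J → ℝ)
    (hl : ∀ j, 0 < l j) (h : Fin J) (τ : ℝ) (hτ : 0 ≤ τ) :
    (∫ u in Set.Ioi τ,
        Real.exp (-u ^ a * ∑ j ∈ Finset.univ.erase h, l j) *
          (a * l h * u ^ (a - 1) * Real.exp (-l h * u ^ a))) =
      (l h / ∑ j, l j) * Real.exp (-τ ^ a * ∑ j, l j) := by
  set L : ℝ := ∑ j, l j with hLdef
  have hLpos : 0 < L := Finset.sum_pos (fun j _ => hl j) ⟨h, Finset.mem_univ h⟩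
  have hsum : (∑ j ∈ Finset.univ.erase h, l j) + l h = L :=
    Finset.sum_erase_add _ _ (Finset.mem_univ h)
  set g : ℝ → ℝ := fun u => -(l h / L) * Real.exp (-L * u ^ a) with hgdef
  set g' : ℝ → ℝ := fun u => a * l h * u ^ (a - 1) * Real.exp (-L * u ^ a) with hg'def
  have hcont : ContinuousWithinAt g (Set.Ici τ) τ := by
    apply ContinuousWithinAt.mul continuousWithinAt_const
    apply Real.continuous_exp.continuousAt.comp_continuousWithinAt
    apply ContinuousWithinAt.mul continuousWithinAt_const
    exact (Real.continuousAt_rpow_const τ a (Or.inr ha.le)).continuousWithinAt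
  have hderiv : ∀ x ∈ Set.Ioi τ, HasDerivAt g (g' x) x := by
    intro x hx
    have hx0 : 0 < x := lt_of_le_of_lt hτ hx
    have h1 : HasDerivAt (fun u : ℝ => u ^ a) (a * x ^ (a - 1)) x :=
      Real.hasDerivAt_rpow_const (Or.inl hx0.ne')
    have h2 : HasDerivAt (fun u : ℝ => -L * u ^ a) (-L * (a * x ^ (a - 1))) x :=
      h1.const_mul _
    have h3 := (h2.exp).const_mul (-(l h / L))
    convert h3 using 1
    · rfl
    · rfl
    show a * l h * x ^ (a - 1) * Real.exp (-L * x ^ a) = _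
    field_simp
  have h0le : ∀ x ∈ Set.Ioi τ, 0 ≤ g' x := by
    intro x hx
    have hx0 : 0 < x := lt_of_le_of_lt hτ hx
    have hp := Real.rpow_pos_of_pos hx0 (a - 1)
    have := Real.exp_pos (-L * x ^ a)
    simp only [hg'def]
    exact le_of_lt (mul_pos (mul_pos (mul_pos ha (hl h)) hp) this)
  have htend : Filter.Tendsto g Filter.atTop (nhds 0) := by
    have h1 : Filter.Tendsto (fun u : ℝ => -L * u ^ a) Filter.atTop Filter.atBot := by
      apply Filter.Tendsto.const_mul_atTop_of_neg (neg_neg_iff_pos.mpr hLpos)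
      exact tendsto_rpow_atTop ha
    have h2 := (Real.tendsto_exp_atBot.comp h1).const_mul (-(l h / L))
    simpa [hgdef, neg_mul] using h2
  have key := integral_Ioi_of_hasDerivAt_of_nonneg hcont hderiv h0le htend
  have heq : ∀ u ∈ Set.Ioi τ,
      Real.exp (-u ^ a * ∑ j ∈ Finset.univ.erase h, l j) *
        (a * l h * u ^ (a - 1) * Real.exp (-l h * u ^ a)) = g' u := by
    intro u _
    simp only [hg'def]
    rw [show (-L * u ^ a) = (-u ^ a * ∑ j ∈ Finset.univ.erase h, l j) + (-l h * u ^ a) by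
      rw [← hsum]; ring]
    rw [Real.exp_add]
    ring
  rw [setIntegral_congr_fun measurableSet_Ioi heq, key]
  rw [hgdef]
  simp only
  rw [show -L * τ ^ a = -τ ^ a * L by ring]
  ring
end

section
/- Let λ_t, t = 1, ..., T, be independent with λ_t ~ Gamma(r_t, 1/b_t) (shapes r_t > 0, rates b_t > 0), define b_(1) = max_t b_t, ρ = Σ_t r_t, γ_h = Σ_t (r_t/h)·(1 − b_t/b_(1))^h for h ≥ 1, δ_0 = 1, and δ_{m+1} = (1/(m+1))·Σ_{h=1}^{m+1} h·γ_h·δ_{m+1−h}. Then 0 ≤ δ_m ≤ Γ(ρ + m)·b_0^m / (Γ(ρ)·m!) for all m ≥ 0, where b_0 = max_t (1 − b_t/b_(1)). -/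
open Real


private lemma gammaC_rec (ρ : ℝ) (hρ : 0 < ρ) (m : ℕ) :
    ρ * ∑ k ∈ Finset.range (m+1), Real.Gamma (ρ + k) / (Real.Gamma ρ * (Nat.factorial k)) =
    ((m:ℝ)+1) * (Real.Gamma (ρ + (m+1 : ℕ)) / (Real.Gamma ρ * (Nat.factorial (m+1)))) := by
  have hΓ : Real.Gamma ρ ≠ 0 := (Real.Gamma_pos_of_pos hρ).ne'
  induction m with
  | zero =>
      have h1 : Real.Gamma (ρ + 1) = ρ * Real.Gamma ρ := Real.Gamma_add_one hρ.ne'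
      simp [h1]
      field_simp
  | succ n ih =>
      have h2 : Real.Gamma (ρ + ((n+2 : ℕ):ℝ)) = (ρ + ((n+1:ℕ):ℝ)) * Real.Gamma (ρ + ((n+1:ℕ):ℝ)) := by
        have h := Real.Gamma_add_one (show (ρ + ((n+1:ℕ):ℝ)) ≠ 0 by positivity)
        have hc : ρ + ((n+2 : ℕ):ℝ) = ρ + ((n+1:ℕ):ℝ) + 1 := by push_cast; ring
        rw [hc, h]
      have h3 : ((Nat.factorial (n+2)) : ℝ) = ((n:ℝ)+2) * (Nat.factorial (n+1)) := by
        rw [Nat.factorial_succ]; push_cast; ring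
      rw [Finset.sum_range_succ, mul_add, ih]
      rw [show n+1+1 = n+2 from rfl, h2, h3]
      have hf : ((Nat.factorial (n+1)) : ℝ) ≠ 0 := by positivity
      field_simp
      push_cast
      ring

/-- Coefficient bound in the Moschopoulos series for the density of a sum of independent
gamma random variables: with `b₁ = max_t b_t`, `ρ = Σ_t r_t`,
`γ_h = Σ_t (r_t/h)(1 - b_t/b₁)^h`, `δ₀ = 1` and
`δ_{m+1} = (1/(m+1)) Σ_{h=1}^{m+1} h γ_h δ_{m+1-h}`, one has
`0 ≤ δ_m ≤ Γ(ρ+m) b₀^m / (Γ(ρ) m!)` where `b₀ = max_t (1 - b_t/b₁)`. -/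
theorem moschopoulos_delta_bound (T : ℕ) (hT : 0 < T) (r b : Fin T → ℝ)
    (hr : ∀ t, 0 < r t) (hb : ∀ t, 0 < b t)
    (b₁ : ℝ) (hb₁ : IsGreatest (Set.range b) b₁)
    (b₀ : ℝ) (hb₀ : IsGreatest (Set.range fun t => 1 - b t / b₁) b₀)
    (ρ : ℝ) (hρ : ρ = ∑ t, r t)
    (γ : ℕ → ℝ) (hγ : ∀ h : ℕ, γ h = ∑ t, (r t / h) * (1 - b t / b₁) ^ h)
    (δ : ℕ → ℝ) (hδ0 : δ 0 = 1)
    (hδ : ∀ m : ℕ, δ (m + 1) =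
      (1 / (m + 1 : ℝ)) * ∑ h ∈ Finset.Icc 1 (m + 1), (h : ℝ) * γ h * δ (m + 1 - h)) :
    ∀ m : ℕ, 0 ≤ δ m ∧
      δ m ≤ Real.Gamma (ρ + m) * b₀ ^ m / (Real.Gamma ρ * (Nat.factorial m : ℝ)) := by
  haveI : NeZero T := ⟨hT.ne'⟩
  obtain ⟨t0, ht0⟩ := hb₁.1
  have hb₁pos : 0 < b₁ := ht0 ▸ hb t0
  have hble : ∀ t, b t ≤ b₁ := fun t => hb₁.2 ⟨t, rfl⟩
  have hkey : ∀ t, 0 ≤ 1 - b t / b₁ := by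
    intro t
    have : b t / b₁ ≤ 1 := (div_le_one hb₁pos).mpr (hble t)
    linarith
  have hkey2 : ∀ t, 1 - b t / b₁ ≤ b₀ := fun t => hb₀.2 ⟨t, rfl⟩
  have hb₀0 : 0 ≤ b₀ := le_trans (hkey t0) (hkey2 t0)
  have hρpos : 0 < ρ := by
    rw [hρ]
    exact Finset.sum_pos (fun t _ => hr t) Finset.univ_nonempty
  have hΓρ : 0 < Real.Gamma ρ := Real.Gamma_pos_of_pos hρpos
  -- bounds on γ
  have hγ0 : ∀ h : ℕ, 1 ≤ h → 0 ≤ γ h := by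
    intro h hh
    rw [hγ]
    apply Finset.sum_nonneg
    intro t _
    have hh2 : (0:ℝ) < h := by exact_mod_cast hh
    exact mul_nonneg (div_nonneg (hr t).le hh2.le) (pow_nonneg (hkey t) h)
  have hγle : ∀ h : ℕ, 1 ≤ h → (h : ℝ) * γ h ≤ ρ * b₀ ^ h := by
    intro h hh
    have hh' : ((h:ℝ)) ≠ 0 := by positivity
    rw [hγ, Finset.mul_sum, hρ, Finset.sum_mul]
    apply Finset.sum_le_sum
    intro t _
    have : (h:ℝ) * (r t / h * (1 - b t / b₁) ^ h) = r t * (1 - b t / b₁) ^ h := by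
      field_simp
    rw [this]
    exact mul_le_mul_of_nonneg_left
      (pow_le_pow_left₀ (hkey t) (hkey2 t) h) (hr t).le
  intro m
  induction m using Nat.strong_induction_on with
  | _ m ih =>
    match m with
    | 0 =>
        constructor
        · rw [hδ0]; norm_num
        · rw [hδ0]
          simp [Nat.factorial, div_self hΓρ.ne']
    | Nat.succ m =>
        have hm1 : (0:ℝ) < (m:ℝ) + 1 := by positivity
        have hsum_le : ∑ h ∈ Finset.Icc 1 (m + 1), (h : ℝ) * γ h * δ (m + 1 - h)
            ≤ ((m:ℝ)+1) * (Real.Gamma (ρ + (m+1:ℕ)) * b₀ ^ (m+1) / (Real.Gamma ρ * (Nat.factorial (m+1)))) := by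
          have step1 : ∑ h ∈ Finset.Icc 1 (m + 1), (h : ℝ) * γ h * δ (m + 1 - h)
              ≤ ∑ h ∈ Finset.Icc 1 (m + 1),
                (ρ * b₀ ^ h) * (Real.Gamma (ρ + ((m+1-h : ℕ):ℝ)) * b₀ ^ (m+1-h) / (Real.Gamma ρ * (Nat.factorial (m+1-h)))) := by
            apply Finset.sum_le_sum
            intro h hh
            rw [Finset.mem_Icc] at hh
            have hlt : m + 1 - h < m + 1 := by omega
            obtain ⟨hd0, hdle⟩ := ih (m+1-h) hlt
            have hγnn : 0 ≤ (h:ℝ) * γ h := mul_nonneg (by positivity) (hγ0 h hh.1)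
            have hub : 0 ≤ ρ * b₀ ^ h := by positivity
            exact mul_le_mul (hγle h hh.1) hdle hd0 hub
          refine le_trans step1 ?_
          have step2 : ∀ h ∈ Finset.Icc 1 (m+1),
              (ρ * b₀ ^ h) * (Real.Gamma (ρ + ((m+1-h : ℕ):ℝ)) * b₀ ^ (m+1-h) / (Real.Gamma ρ * (Nat.factorial (m+1-h))))
              = ρ * b₀ ^ (m+1) * (Real.Gamma (ρ + ((m+1-h : ℕ):ℝ)) / (Real.Gamma ρ * (Nat.factorial (m+1-h)))) := by
            intro h hh
            rw [Finset.mem_Icc] at hh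
            have : b₀ ^ h * b₀ ^ (m+1-h) = b₀ ^ (m+1) := by
              rw [← pow_add]; congr 1; omega
            field_simp
            rw [← this]
          rw [Finset.sum_congr rfl step2, ← Finset.mul_sum]
          have reindex : ∑ h ∈ Finset.Icc 1 (m+1), Real.Gamma (ρ + ((m+1-h : ℕ):ℝ)) / (Real.Gamma ρ * (Nat.factorial (m+1-h)))
              = ∑ k ∈ Finset.range (m+1), Real.Gamma (ρ + (k:ℝ)) / (Real.Gamma ρ * (Nat.factorial k)) := by
            refine Finset.sum_bij' (fun h _ => m+1-h) (fun k _ => m+1-k) ?_ ?_ ?_ ?_ ?_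
            · intro a ha
              simp only [Finset.mem_Icc] at ha
              simp only [Finset.mem_range]; omega
            · intro a ha
              simp only [Finset.mem_range] at ha
              simp only [Finset.mem_Icc]; omega
            · intro a ha
              simp only [Finset.mem_Icc] at ha
              show m+1-(m+1-a) = a; omega
            · intro a ha
              simp only [Finset.mem_range] at ha
              show m+1-(m+1-a) = a; omega
            · intro a ha; rfl
          rw [reindex, show ρ * b₀ ^ (m+1) * _ = b₀ ^ (m+1) * (ρ * ∑ k ∈ Finset.range (m+1), Real.Gamma (ρ + (k:ℝ)) / (Real.Gamma ρ * (Nat.factorial k))) from by ring,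
            gammaC_rec ρ hρpos m]
          ring_nf
          exact le_refl _
        constructor
        · rw [hδ]
          apply mul_nonneg (by positivity)
          apply Finset.sum_nonneg
          intro h hh
          rw [Finset.mem_Icc] at hh
          have hlt : m + 1 - h < m + 1 := by omega
          exact mul_nonneg (mul_nonneg (by positivity) (hγ0 h hh.1)) (ih _ hlt).1
        · rw [hδ]
          calc (1 / ((m:ℝ) + 1)) * ∑ h ∈ Finset.Icc 1 (m + 1), (h : ℝ) * γ h * δ (m + 1 - h)
              ≤ (1 / ((m:ℝ) + 1)) * (((m:ℝ)+1) * (Real.Gamma (ρ + (m+1:ℕ)) * b₀ ^ (m+1) / (Real.Gamma ρ * (Nat.factorial (m+1))))) := by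
                apply mul_le_mul_of_nonneg_left hsum_le (by positivity)
            _ = Real.Gamma (ρ + ((m+1:ℕ):ℝ)) * b₀ ^ (m+1) / (Real.Gamma ρ * (Nat.factorial (m+1))) := by
                field_simp
end
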